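/- Fix n ≥ 3 and ρ* ∈ (0,1)^n. There exists ε₀ > 0 with the following property: for every initial point ρ⁰ ∈ [0,1)^n with ‖ρ⁰ − g¹‖₂ < ε₀ and ρ⁰_i < 1 for all i, there exists a finite t ≥ 0 such that the EM iterate ρ^t (defined by ρ^{s+1} = F(ρ^s) starting from ρ⁰) satisfies ‖ρ^t − g¹‖₂ > ε₀. In particular, the EM iteration started at any such point does not converge to the boundary fixed point g¹. -/

import Mathlib

open Finset Filter

/-- Conditional-mean coefficients for the one-latent-node Gaussian tree model. -/
noncomputable def lam (n : ℕ) (ρ : Fin n → ℝ) (j : Fin n) : ℝ :=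
  (ρ j / (1 - ρ j ^ 2)) / (1 + ∑ k, ρ k ^ 2 / (1 - ρ k ^ 2))

/-- Population EM update map `F` for true correlations `ρs`. -/
noncomputable def emF (n : ℕ) (ρs ρ : Fin n → ℝ) (i : Fin n) : ℝ :=
  (ρ i + ∑ j ∈ Finset.univ.erase i, (ρs i * ρs j - ρ i * ρ j) * lam n ρ j) /
    Real.sqrt (1 + ∑ j, ∑ k ∈ Finset.univ.erase j,
      (ρs j * ρs k - ρ j * ρ k) * lam n ρ j * lam n ρ k)

/-- The boundary fixed point `g¹`: first coordinate `1`, and `ρ*_1 ρ*_j` elsewhere. -/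
noncomputable def gvec (n : ℕ) (h : 0 < n) (ρs : Fin n → ℝ) : Fin n → ℝ :=
  fun i => if i = ⟨0, h⟩ then 1 else ρs ⟨0, h⟩ * ρs i

/-! ### Auxiliary rational functions -/

/-- `T(ρ) = 1 + ∑ ρ_k²/(1-ρ_k²)`, the common denominator of `lam`. -/
noncomputable def Tfun (n : ℕ) (ρ : Fin n → ℝ) : ℝ :=
  1 + ∑ k, ρ k ^ 2 / (1 - ρ k ^ 2)

noncomputable def Ufun (n : ℕ) (ρs : Fin n → ℝ) (i0 : Fin n) (ρ : Fin n → ℝ) : ℝ :=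
  ∑ j ∈ Finset.univ.erase i0, (ρs i0 * ρs j - ρ i0 * ρ j) * (ρ j / (1 - ρ j ^ 2))

noncomputable def Sfun (n : ℕ) (i0 : Fin n) (ρ : Fin n → ℝ) : ℝ :=
  ∑ j ∈ Finset.univ.erase i0, ρ j ^ 2 / (1 - ρ j ^ 2)

noncomputable def Vfun (n : ℕ) (ρs : Fin n → ℝ) (i0 : Fin n) (ρ : Fin n → ℝ) : ℝ :=
  ∑ j ∈ Finset.univ.erase i0, ∑ k ∈ (Finset.univ.erase i0).erase j,
    (ρs j * ρs k - ρ j * ρ k) * (ρ j / (1 - ρ j ^ 2)) * (ρ k / (1 - ρ k ^ 2))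

noncomputable def Phifun (n : ℕ) (ρs : Fin n → ℝ) (i0 : Fin n) (ρ : Fin n → ℝ) : ℝ :=
  (ρ i0) ^ 2 * Vfun n ρs i0 ρ - 2 * (ρ i0) * (1 + Sfun n i0 ρ) * Ufun n ρs i0 ρ
    - (Ufun n ρs i0 ρ) ^ 2

noncomputable def Psifun (n : ℕ) (ρs : Fin n → ℝ) (i0 : Fin n) (ρ : Fin n → ℝ) : ℝ :=
  ((ρ i0) ^ 2 + (1 - (ρ i0) ^ 2) * (1 + Sfun n i0 ρ)) ^ 2
    + 2 * (1 - (ρ i0) ^ 2) * (ρ i0) * Ufun n ρs i0 ρ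
    + (1 - (ρ i0) ^ 2) ^ 2 * Vfun n ρs i0 ρ

noncomputable def Nfun (n : ℕ) (ρs : Fin n → ℝ) (i0 : Fin n) (ρ : Fin n → ℝ) : ℝ :=
  ρ i0 + ∑ j ∈ Finset.univ.erase i0, (ρs i0 * ρs j - ρ i0 * ρ j) * lam n ρ j

noncomputable def Qfun (n : ℕ) (ρs : Fin n → ℝ) (ρ : Fin n → ℝ) : ℝ :=
  1 + ∑ j, ∑ k ∈ Finset.univ.erase j,
      (ρs j * ρs k - ρ j * ρ k) * lam n ρ j * lam n ρ k

lemma emF_eq (n : ℕ) (ρs ρ : Fin n → ℝ) (i : Fin n) :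
    emF n ρs ρ i = Nfun n ρs i ρ / Real.sqrt (Qfun n ρs ρ) := rfl

/-! ### Sum splitting -/

lemma sum_split (n : ℕ) (i0 : Fin n) (f : Fin n → Fin n → ℝ) :
    ∑ j, ∑ k ∈ Finset.univ.erase j, f j k
      = (∑ k ∈ Finset.univ.erase i0, f i0 k) + (∑ j ∈ Finset.univ.erase i0, f j i0)
        + ∑ j ∈ Finset.univ.erase i0, ∑ k ∈ (Finset.univ.erase i0).erase j, f j k := by
  classical
  rw [← Finset.sum_erase_add Finset.univ _ (Finset.mem_univ i0)]
  have h : ∀ j ∈ Finset.univ.erase i0,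
      (∑ k ∈ Finset.univ.erase j, f j k)
        = (∑ k ∈ (Finset.univ.erase i0).erase j, f j k) + f j i0 := by
    intro j hj
    have hji : j ≠ i0 := Finset.ne_of_mem_erase hj
    have hi0 : i0 ∈ Finset.univ.erase j :=
      Finset.mem_erase.mpr ⟨fun h => hji h.symm, Finset.mem_univ _⟩
    rw [← Finset.sum_erase_add _ _ hi0, Finset.erase_right_comm]
  rw [Finset.sum_congr rfl h, Finset.sum_add_distrib]
  ring

/-! ### Rewriting N, Q, T via the rational functions -/

lemma Tfun_eq (n : ℕ) (i0 : Fin n) (ρ : Fin n → ℝ) :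
    Tfun n ρ = 1 + ρ i0 ^ 2 / (1 - ρ i0 ^ 2) + Sfun n i0 ρ := by
  rw [Tfun, Sfun, ← Finset.sum_erase_add Finset.univ _ (Finset.mem_univ i0)]
  ring

lemma Nfun_eq (n : ℕ) (ρs : Fin n → ℝ) (i0 : Fin n) (ρ : Fin n → ℝ) :
    Nfun n ρs i0 ρ = ρ i0 + Ufun n ρs i0 ρ * (Tfun n ρ)⁻¹ := by
  rw [Nfun, Ufun, Finset.sum_mul]
  congr 1
  refine Finset.sum_congr rfl fun j hj => ?_
  simp only [lam, Tfun]
  ring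

lemma Qfun_eq (n : ℕ) (ρs : Fin n → ℝ) (i0 : Fin n) (ρ : Fin n → ℝ) :
    Qfun n ρs ρ = 1
      + 2 * ((ρ i0 / (1 - ρ i0 ^ 2)) * Ufun n ρs i0 ρ) * ((Tfun n ρ)⁻¹ * (Tfun n ρ)⁻¹)
      + Vfun n ρs i0 ρ * ((Tfun n ρ)⁻¹ * (Tfun n ρ)⁻¹) := by
  rw [Qfun, sum_split n i0]
  have e1 : (∑ k ∈ Finset.univ.erase i0,
        (ρs i0 * ρs k - ρ i0 * ρ k) * lam n ρ i0 * lam n ρ k)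
      = (ρ i0 / (1 - ρ i0 ^ 2)) * Ufun n ρs i0 ρ * ((Tfun n ρ)⁻¹ * (Tfun n ρ)⁻¹) := by
    rw [Ufun, Finset.mul_sum, Finset.sum_mul]
    refine Finset.sum_congr rfl fun k hk => ?_
    simp only [lam, Tfun]
    ring
  have e2 : (∑ j ∈ Finset.univ.erase i0,
        (ρs j * ρs i0 - ρ j * ρ i0) * lam n ρ j * lam n ρ i0)
      = (ρ i0 / (1 - ρ i0 ^ 2)) * Ufun n ρs i0 ρ * ((Tfun n ρ)⁻¹ * (Tfun n ρ)⁻¹) := by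
    rw [Ufun, Finset.mul_sum, Finset.sum_mul]
    refine Finset.sum_congr rfl fun j hj => ?_
    simp only [lam, Tfun]
    ring
  have e3 : (∑ j ∈ Finset.univ.erase i0, ∑ k ∈ (Finset.univ.erase i0).erase j,
        (ρs j * ρs k - ρ j * ρ k) * lam n ρ j * lam n ρ k)
      = Vfun n ρs i0 ρ * ((Tfun n ρ)⁻¹ * (Tfun n ρ)⁻¹) := by
    rw [Vfun, Finset.sum_mul]
    refine Finset.sum_congr rfl fun j hj => ?_
    rw [Finset.sum_mul]
    refine Finset.sum_congr rfl fun k hk => ?_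
    simp only [lam, Tfun]
    ring
  rw [e1, e2, e3]
  ring

/-! ### The key algebraic identity -/

lemma one_sub_emF_sq (n : ℕ) (ρs : Fin n → ℝ) (i0 : Fin n) (ρ : Fin n → ℝ)
    (hj : ∀ j, ρ j ^ 2 < 1) (hΨ : 0 < Psifun n ρs i0 ρ) :
    1 - (emF n ρs ρ i0) ^ 2
      = (1 - ρ i0 ^ 2) + (1 - ρ i0 ^ 2) ^ 2 * (Phifun n ρs i0 ρ / Psifun n ρs i0 ρ) := by
  have hw : 0 < 1 - ρ i0 ^ 2 := by linarith [hj i0]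
  have hT1 : (1 : ℝ) ≤ Tfun n ρ := by
    rw [Tfun]
    have : (0:ℝ) ≤ ∑ k, ρ k ^ 2 / (1 - ρ k ^ 2) := by
      refine Finset.sum_nonneg fun k _ => div_nonneg (sq_nonneg _) ?_
      linarith [hj k]
    linarith
  have hT0 : Tfun n ρ ≠ 0 := by linarith
  have hTD : Tfun n ρ
      = (ρ i0 ^ 2 + (1 - ρ i0 ^ 2) * (1 + Sfun n i0 ρ)) / (1 - ρ i0 ^ 2) := by
    rw [Tfun_eq n i0 ρ]
    field_simp
    ring
  have hD0 : ρ i0 ^ 2 + (1 - ρ i0 ^ 2) * (1 + Sfun n i0 ρ) ≠ 0 := by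
    have : Tfun n ρ * (1 - ρ i0 ^ 2) = ρ i0 ^ 2 + (1 - ρ i0 ^ 2) * (1 + Sfun n i0 ρ) := by
      rw [hTD]; field_simp
    rw [← this]
    exact mul_ne_zero hT0 hw.ne'
  have h7a : (1 - ρ i0 ^ 2) ^ 2 * (Tfun n ρ) ^ 2 * Qfun n ρs ρ = Psifun n ρs i0 ρ := by
    rw [Qfun_eq n ρs i0 ρ, hTD, Psifun]
    field_simp
  have h7b : (Tfun n ρ) ^ 2 * ((ρ i0) ^ 2 * Qfun n ρs ρ - (Nfun n ρs i0 ρ) ^ 2)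
      = Phifun n ρs i0 ρ := by
    rw [Qfun_eq n ρs i0 ρ, Nfun_eq n ρs i0 ρ, hTD, Phifun]
    field_simp
    ring
  have hQ0 : 0 < Qfun n ρs ρ := by
    have hp : 0 < (1 - ρ i0 ^ 2) ^ 2 * (Tfun n ρ) ^ 2 := by positivity
    nlinarith [h7a, hΨ]
  rw [emF_eq, div_pow, Real.sq_sqrt hQ0.le]
  rw [← h7a, ← h7b]
  field_simp
  ring

/-! ### Continuity -/

lemma contAt_sum {ι X : Type*} [TopologicalSpace X] (s : Finset ι)
    (f : ι → X → ℝ) (x : X) (h : ∀ i ∈ s, ContinuousAt (f i) x) :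
    ContinuousAt (fun y => ∑ i ∈ s, f i y) x := by
  classical
  induction s using Finset.induction_on with
  | empty => simpa using continuousAt_const
  | @insert a s ha ih =>
      simp only [Finset.sum_insert ha]
      exact (h a (Finset.mem_insert_self a s)).add
        (ih fun i hi => h i (Finset.mem_insert_of_mem hi))

lemma contAt_term (n : ℕ) (j : Fin n) (x : Fin n → ℝ) (hx : 1 - x j ^ 2 ≠ 0) :
    ContinuousAt (fun ρ : Fin n → ℝ => ρ j / (1 - ρ j ^ 2)) x := by
  exact ((continuous_apply j).continuousAt).div
    (continuousAt_const.sub ((continuous_apply j).continuousAt.pow 2)) hx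

lemma contAt_Ufun (n : ℕ) (ρs : Fin n → ℝ) (i0 : Fin n) (x : Fin n → ℝ)
    (hx : ∀ j ∈ Finset.univ.erase i0, 1 - x j ^ 2 ≠ 0) :
    ContinuousAt (Ufun n ρs i0) x := by
  refine contAt_sum _ _ _ fun j hj => ?_
  exact (continuousAt_const.sub
    (((continuous_apply i0).continuousAt).mul ((continuous_apply j).continuousAt))).mul
    (contAt_term n j x (hx j hj))

lemma contAt_Sfun (n : ℕ) (i0 : Fin n) (x : Fin n → ℝ)
    (hx : ∀ j ∈ Finset.univ.erase i0, 1 - x j ^ 2 ≠ 0) :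
    ContinuousAt (Sfun n i0) x := by
  refine contAt_sum _ _ _ fun j hj => ?_
  exact ((continuous_apply j).continuousAt.pow 2).div
    (continuousAt_const.sub ((continuous_apply j).continuousAt.pow 2)) (hx j hj)

lemma contAt_Vfun (n : ℕ) (ρs : Fin n → ℝ) (i0 : Fin n) (x : Fin n → ℝ)
    (hx : ∀ j ∈ Finset.univ.erase i0, 1 - x j ^ 2 ≠ 0) :
    ContinuousAt (Vfun n ρs i0) x := by
  refine contAt_sum _ _ _ fun j hj => ?_
  refine contAt_sum _ _ _ fun k hk => ?_
  have hk' : k ∈ Finset.univ.erase i0 := Finset.mem_of_mem_erase hk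
  exact ((continuousAt_const.sub
      (((continuous_apply j).continuousAt).mul ((continuous_apply k).continuousAt))).mul
      (contAt_term n j x (hx j hj))).mul (contAt_term n k x (hx k hk'))

lemma contAt_Phifun (n : ℕ) (ρs : Fin n → ℝ) (i0 : Fin n) (x : Fin n → ℝ)
    (hx : ∀ j ∈ Finset.univ.erase i0, 1 - x j ^ 2 ≠ 0) :
    ContinuousAt (Phifun n ρs i0) x := by
  have hU := contAt_Ufun n ρs i0 x hx
  have hS := contAt_Sfun n i0 x hx
  have hV := contAt_Vfun n ρs i0 x hx
  have hr : ContinuousAt (fun ρ : Fin n → ℝ => ρ i0) x := (continuous_apply i0).continuousAt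
  exact ((((hr.pow 2).mul hV).sub
    ((((continuousAt_const.mul hr)).mul (continuousAt_const.add hS)).mul hU)).sub (hU.pow 2))

lemma contAt_Psifun (n : ℕ) (ρs : Fin n → ℝ) (i0 : Fin n) (x : Fin n → ℝ)
    (hx : ∀ j ∈ Finset.univ.erase i0, 1 - x j ^ 2 ≠ 0) :
    ContinuousAt (Psifun n ρs i0) x := by
  have hU := contAt_Ufun n ρs i0 x hx
  have hS := contAt_Sfun n i0 x hx
  have hV := contAt_Vfun n ρs i0 x hx
  have hr : ContinuousAt (fun ρ : Fin n → ℝ => ρ i0) x := (continuous_apply i0).continuousAt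
  have hw : ContinuousAt (fun ρ : Fin n → ℝ => 1 - ρ i0 ^ 2) x :=
    continuousAt_const.sub (hr.pow 2)
  exact ((((hr.pow 2).add (hw.mul (continuousAt_const.add hS))).pow 2).add
    (((continuousAt_const.mul hw).mul hr).mul hU)).add ((hw.pow 2).mul hV)

/-! ### Values at the boundary fixed point -/

section AtG

variable (n : ℕ) (hpos : 0 < n) (ρs : Fin n → ℝ)

lemma gvec_i0 : gvec n hpos ρs ⟨0, hpos⟩ = 1 := by simp [gvec]

lemma gvec_ne (j : Fin n) (hj : j ≠ ⟨0, hpos⟩) :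
    gvec n hpos ρs j = ρs ⟨0, hpos⟩ * ρs j := by simp [gvec, hj]

lemma Ufun_at_g : Ufun n ρs ⟨0, hpos⟩ (gvec n hpos ρs) = 0 := by
  refine Finset.sum_eq_zero fun j hj => ?_
  have hj' : j ≠ ⟨0, hpos⟩ := Finset.ne_of_mem_erase hj
  rw [gvec_i0, gvec_ne n hpos ρs j hj']
  ring

lemma Phifun_at_g :
    Phifun n ρs ⟨0, hpos⟩ (gvec n hpos ρs) = Vfun n ρs ⟨0, hpos⟩ (gvec n hpos ρs) := by
  rw [Phifun, Ufun_at_g, gvec_i0]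
  ring

lemma Psifun_at_g : Psifun n ρs ⟨0, hpos⟩ (gvec n hpos ρs) = 1 := by
  rw [Psifun, Ufun_at_g, gvec_i0]
  norm_num

lemma Vfun_at_g_pos (hn : 3 ≤ n) (hρs : ∀ i, ρs i ∈ Set.Ioo (0 : ℝ) 1) :
    0 < Vfun n ρs ⟨0, hpos⟩ (gvec n hpos ρs) := by
  have hcard : (Finset.univ.erase (⟨0, hpos⟩ : Fin n)).card = n - 1 := by
    rw [Finset.card_erase_of_mem (Finset.mem_univ _), Finset.card_univ, Fintype.card_fin]
  refine Finset.sum_pos (fun j hj => ?_) ?_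
  · have hcard2 : ((Finset.univ.erase (⟨0, hpos⟩ : Fin n)).erase j).card = n - 2 := by
      rw [Finset.card_erase_of_mem hj, hcard]
      omega
    refine Finset.sum_pos (fun k hk => ?_) ?_
    · have hj' : j ≠ ⟨0, hpos⟩ := Finset.ne_of_mem_erase hj
      have hk' : k ≠ ⟨0, hpos⟩ := Finset.ne_of_mem_erase (Finset.mem_of_mem_erase hk)
      rw [gvec_ne n hpos ρs j hj', gvec_ne n hpos ρs k hk']
      obtain ⟨h0j, h1j⟩ := hρs j
      obtain ⟨h0k, h1k⟩ := hρs k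
      obtain ⟨h00, h10⟩ := hρs ⟨0, hpos⟩
      have hmj0 : 0 < ρs ⟨0, hpos⟩ * ρs j := mul_pos h00 h0j
      have hmk0 : 0 < ρs ⟨0, hpos⟩ * ρs k := mul_pos h00 h0k
      have hmj1 : ρs ⟨0, hpos⟩ * ρs j < 1 := by nlinarith
      have hmk1 : ρs ⟨0, hpos⟩ * ρs k < 1 := by nlinarith
      have h1 : 0 < ρs j * ρs k - ρs ⟨0, hpos⟩ * ρs j * (ρs ⟨0, hpos⟩ * ρs k) := by
        have he : ρs j * ρs k - ρs ⟨0, hpos⟩ * ρs j * (ρs ⟨0, hpos⟩ * ρs k)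
            = ρs j * ρs k * (1 - ρs ⟨0, hpos⟩ ^ 2) := by ring
        rw [he]
        exact mul_pos (mul_pos h0j h0k) (by nlinarith)
      have h2 : 0 < ρs ⟨0, hpos⟩ * ρs j / (1 - (ρs ⟨0, hpos⟩ * ρs j) ^ 2) := by
        apply div_pos hmj0; nlinarith
      have h3 : 0 < ρs ⟨0, hpos⟩ * ρs k / (1 - (ρs ⟨0, hpos⟩ * ρs k) ^ 2) := by
        apply div_pos hmk0; nlinarith
      exact mul_pos (mul_pos h1 h2) h3
    · rw [← Finset.card_pos, hcard2]; omega
  · rw [← Finset.card_pos, hcard]; omega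

end AtG

/-! ### The key drift estimate near the boundary fixed point -/

set_option maxHeartbeats 1000000 in
lemma key_drift (n : ℕ) (hn : 3 ≤ n) (ρs : Fin n → ℝ)
    (hρs : ∀ i, ρs i ∈ Set.Ioo (0 : ℝ) 1) (hpos : 0 < n) :
    ∃ ε > (0:ℝ), ε ≤ 1/2 ∧ ∃ c > (0:ℝ), ∀ ρ : Fin n → ℝ,
      (∀ i, |ρ i - gvec n hpos ρs i| ≤ ε) → ρ ⟨0, hpos⟩ < 1 →
      (1 - ρ ⟨0, hpos⟩ ^ 2) * (1 + c * (1 - ρ ⟨0, hpos⟩ ^ 2))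
        ≤ 1 - (emF n ρs ρ ⟨0, hpos⟩) ^ 2 := by
  classical
  set i0 : Fin n := ⟨0, hpos⟩ with hi0
  set g : Fin n → ℝ := gvec n hpos ρs with hgdef
  have hE : (Finset.univ.erase i0).Nonempty := by
    rw [← Finset.card_pos, Finset.card_erase_of_mem (Finset.mem_univ _),
      Finset.card_univ, Fintype.card_fin]
    omega
  have hgj : ∀ j ∈ Finset.univ.erase i0, 0 < g j ∧ g j < 1 := by
    intro j hj
    have hj' : j ≠ i0 := Finset.ne_of_mem_erase hj
    rw [hgdef, gvec_ne n hpos ρs j hj']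
    obtain ⟨h0j, h1j⟩ := hρs j
    obtain ⟨h00, h10⟩ := hρs i0
    exact ⟨mul_pos h00 h0j, by nlinarith⟩
  have hgne : ∀ j ∈ Finset.univ.erase i0, 1 - g j ^ 2 ≠ 0 := by
    intro j hj
    obtain ⟨h0, h1⟩ := hgj j hj
    nlinarith
  -- sup of the non-apex coordinates of g
  set K : ℝ := (Finset.univ.erase i0).sup' hE g with hKdef
  have hK1 : K < 1 := by
    rw [hKdef, Finset.sup'_lt_iff]
    exact fun j hj => (hgj j hj).2
  have hKge : ∀ j ∈ Finset.univ.erase i0, g j ≤ K := fun j hj => Finset.le_sup' g hj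
  -- value and continuity data
  have hΦG : 0 < Phifun n ρs i0 g := by
    rw [hgdef, hi0, Phifun_at_g]
    exact Vfun_at_g_pos n hpos ρs hn hρs
  obtain ⟨δ₁, hδ₁, hball₁⟩ :=
    Metric.continuousAt_iff.mp (contAt_Phifun n ρs i0 g hgne) (Phifun n ρs i0 g / 2)
      (by positivity)
  obtain ⟨δ₂, hδ₂, hball₂⟩ :=
    Metric.continuousAt_iff.mp (contAt_Psifun n ρs i0 g hgne) (1/2) (by norm_num)
  refine ⟨min (min (δ₁/2) (δ₂/2)) (min ((1-K)/2) (1/2)), ?_, ?_,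
    Phifun n ρs i0 g / 4, by positivity, ?_⟩
  · have : (0:ℝ) < (1-K)/2 := by linarith
    positivity
  · exact le_trans (min_le_right _ _) (min_le_right _ _)
  intro ρ hbox hρlt
  set ε : ℝ := min (min (δ₁/2) (δ₂/2)) (min ((1-K)/2) (1/2)) with hεdef
  have hεδ₁ : ε ≤ δ₁/2 := le_trans (min_le_left _ _) (min_le_left _ _)
  have hεδ₂ : ε ≤ δ₂/2 := le_trans (min_le_left _ _) (min_le_right _ _)
  have hεK : ε ≤ (1-K)/2 := le_trans (min_le_right _ _) (min_le_left _ _)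
  have hεhalf : ε ≤ 1/2 := le_trans (min_le_right _ _) (min_le_right _ _)
  have hε0 : 0 < ε := by
    have h1 : (0:ℝ) < (1-K)/2 := by linarith
    have h2 : (0:ℝ) < min ((1-K)/2) (1/2) := by positivity
    have h3 : (0:ℝ) < min (δ₁/2) (δ₂/2) := by positivity
    rw [hεdef]
    exact lt_min h3 h2
  have hdist : dist ρ g ≤ ε := by
    rw [dist_pi_le_iff hε0.le]
    intro i
    rw [Real.dist_eq]
    exact hbox i
  have hΦρ : Phifun n ρs i0 g / 2 < Phifun n ρs i0 ρ := by
    have h := hball₁ (lt_of_le_of_lt (le_trans hdist hεδ₁) (by linarith))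
    rw [Real.dist_eq] at h
    have := abs_lt.mp h
    linarith [this.1]
  have hΨρ : 1/2 < Psifun n ρs i0 ρ ∧ Psifun n ρs i0 ρ < 2 := by
    have h := hball₂ (lt_of_le_of_lt (le_trans hdist hεδ₂) (by linarith))
    rw [Real.dist_eq] at h
    rw [hgdef, hi0, Psifun_at_g] at h
    have := abs_lt.mp h
    constructor <;> linarith [this.1, this.2]
  -- the coordinates of ρ are in (-1,1)
  have hρi0 : 1 - ε ≤ ρ i0 := by
    have h := hbox i0
    rw [hgdef, hi0, gvec_i0] at h
    have := abs_le.mp h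
    linarith [this.1]
  have hj : ∀ j, ρ j ^ 2 < 1 := by
    intro j
    by_cases hji : j = i0
    · rw [hji]
      have h2 : (1:ℝ)/2 ≤ ρ i0 := by linarith
      nlinarith
    · have hjE : j ∈ Finset.univ.erase i0 := Finset.mem_erase.mpr ⟨hji, Finset.mem_univ _⟩
      have h := abs_le.mp (hbox j)
      obtain ⟨h0, h1⟩ := hgj j hjE
      have hKj := hKge j hjE
      have hup : ρ j < 1 := by
        have : ρ j ≤ g j + ε := by linarith [h.2]
        have : ρ j ≤ K + (1-K)/2 := by linarith
        linarith
      have hlo : -1 < ρ j := by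
        have : g j - ε ≤ ρ j := by linarith [h.1]
        have : -(1/2 : ℝ) < ρ j := by linarith
        linarith
      nlinarith
  have hΨpos : 0 < Psifun n ρs i0 ρ := by linarith [hΨρ.1]
  rw [one_sub_emF_sq n ρs i0 ρ hj hΨpos]
  have hcle : Phifun n ρs i0 g / 4 ≤ Phifun n ρs i0 ρ / Psifun n ρs i0 ρ := by
    rw [div_le_div_iff₀ (by norm_num) hΨpos]
    nlinarith [hΨρ.2, hΦρ]
  have hwnn : (0:ℝ) ≤ (1 - ρ i0 ^ 2) ^ 2 := sq_nonneg _
  have hmul := mul_le_mul_of_nonneg_left hcle hwnn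
  nlinarith [hmul]

/-- The EM iteration escapes an `ε₀`-neighborhood of the boundary fixed point `g¹`:
started at any point of `[0,1)^n` within distance `ε₀` of `g¹`, some iterate leaves
the `ε₀`-ball around `g¹`. -/
theorem em_escapes_boundary_fixed_point (n : ℕ) (hn : 3 ≤ n) (ρs : Fin n → ℝ)
    (hρs : ∀ i, ρs i ∈ Set.Ioo (0 : ℝ) 1) :
    ∃ ε₀ > (0 : ℝ), ∀ ρ0 : Fin n → ℝ, (∀ i, ρ0 i ∈ Set.Ico (0 : ℝ) 1) →
      Real.sqrt (∑ i, (ρ0 i - gvec n (by omega) ρs i) ^ 2) < ε₀ →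
      ∃ t : ℕ, ε₀ < Real.sqrt (∑ i, ((emF n ρs)^[t] ρ0 i - gvec n (by omega) ρs i) ^ 2) := by
  have hpos : 0 < n := by omega
  obtain ⟨ε, hε, hεhalf, c, hc, hkey⟩ := key_drift n hn ρs hρs hpos
  refine ⟨ε, hε, ?_⟩
  intro ρ0 hρ0 _hdist0
  by_contra hcon
  push_neg at hcon
  have hcoord : ∀ (t : ℕ) (i : Fin n),
      |(emF n ρs)^[t] ρ0 i - gvec n hpos ρs i| ≤ ε := by
    intro t i
    have h1 : ((emF n ρs)^[t] ρ0 i - gvec n hpos ρs i) ^ 2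
        ≤ ∑ i', ((emF n ρs)^[t] ρ0 i' - gvec n hpos ρs i') ^ 2 :=
      Finset.single_le_sum (f := fun i' => ((emF n ρs)^[t] ρ0 i' - gvec n hpos ρs i') ^ 2)
        (fun i' _ => sq_nonneg _) (Finset.mem_univ i)
    calc |(emF n ρs)^[t] ρ0 i - gvec n hpos ρs i|
        = Real.sqrt (((emF n ρs)^[t] ρ0 i - gvec n hpos ρs i) ^ 2) :=
          (Real.sqrt_sq_eq_abs _).symm
      _ ≤ Real.sqrt (∑ i', ((emF n ρs)^[t] ρ0 i' - gvec n hpos ρs i') ^ 2) :=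
          Real.sqrt_le_sqrt h1
      _ ≤ ε := hcon t
  set i0 : Fin n := ⟨0, hpos⟩ with hi0
  set v0 : ℝ := 1 - (ρ0 i0) ^ 2 with hv0def
  have hv0 : 0 < v0 := by
    obtain ⟨ha, hb⟩ := hρ0 i0
    rw [hv0def]; nlinarith
  have hone : (1:ℝ) < 1 + c * v0 := by nlinarith
  have hmain : ∀ t : ℕ, v0 * (1 + c * v0) ^ t ≤ 1 - ((emF n ρs)^[t] ρ0 i0) ^ 2 := by
    intro t
    induction t with
    | zero => simp; exact hv0def.le
    | succ t ih =>
        have hvt : 0 < 1 - ((emF n ρs)^[t] ρ0 i0) ^ 2 := by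
          have hp : 0 < v0 * (1 + c * v0) ^ t := by positivity
          linarith
        have hv0le : v0 ≤ 1 - ((emF n ρs)^[t] ρ0 i0) ^ 2 := by
          have hp : (1:ℝ) ≤ (1 + c * v0) ^ t := one_le_pow₀ hone.le
          nlinarith
        have hlt1 : (emF n ρs)^[t] ρ0 i0 < 1 := by nlinarith
        have hk := hkey ((emF n ρs)^[t] ρ0) (hcoord t) hlt1
        rw [Function.iterate_succ_apply']
        have hstep2 : (1 - ((emF n ρs)^[t] ρ0 i0) ^ 2) * (1 + c * v0)
            ≤ (1 - ((emF n ρs)^[t] ρ0 i0) ^ 2)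
              * (1 + c * (1 - ((emF n ρs)^[t] ρ0 i0) ^ 2)) := by
          apply mul_le_mul_of_nonneg_left _ hvt.le
          nlinarith
        have hstep1 : v0 * (1 + c * v0) ^ (t+1)
            ≤ (1 - ((emF n ρs)^[t] ρ0 i0) ^ 2) * (1 + c * v0) := by
          rw [pow_succ]
          rw [← mul_assoc]
          exact mul_le_mul_of_nonneg_right ih (by linarith)
        calc v0 * (1 + c * v0) ^ (t+1)
            ≤ (1 - ((emF n ρs)^[t] ρ0 i0) ^ 2) * (1 + c * v0) := hstep1
          _ ≤ (1 - ((emF n ρs)^[t] ρ0 i0) ^ 2)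
              * (1 + c * (1 - ((emF n ρs)^[t] ρ0 i0) ^ 2)) := hstep2
          _ ≤ 1 - (emF n ρs ((emF n ρs)^[t] ρ0) i0) ^ 2 := hk
  obtain ⟨t, ht⟩ := pow_unbounded_of_one_lt (1 / v0) hone
  have h1 : 1 < v0 * (1 + c * v0) ^ t := by
    rw [div_lt_iff₀ hv0] at ht
    nlinarith
  have h2 := hmain t
  nlinarith [sq_nonneg ((emF n ρs)^[t] ρ0 i0)]
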